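/- Let h : X → Y → ℝ and suppose |h x y − F x y| ≤ ε · F x y for all (x, y), where ε ∈ [0,1) and F x y > 0 for all (x, y). Let β ∈ (0,1] and let M : X → Y be any decision rule that is a β-approximate minimizer of the score, i.e., β · h x (M x) ≤ min over y ∈ Y of h x y, for every x ∈ X. Then for every probability mass function D_X on X, the expected optimization ratio satisfies ∑_{x ∈ X} D_X x · ( (min over y ∈ Y of F x y) / F x (M x) ) ≥ β · (1−ε)/(1+ε). -/
import Mathlib


/-- If the score `h` is a uniform `ε`-multiplicative approximation of the
latent objective `F`, then any decision rule `Mdl` that `β`-approximately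
minimizes `h` has expected optimization ratio at least `β (1−ε)/(1+ε)` under
any query distribution `D_X`. -/
theorem qrts_generalization_ratio
    {G X Y : Type*} [Fintype G] [Nonempty G] [Fintype X] [Nonempty X]
    [Fintype Y] [Nonempty Y]
    (f : X → Y → G → ℝ) (M : ℝ) (hM : 0 < M)
    (hf0 : ∀ x y g, 0 ≤ f x y g) (hfM : ∀ x y g, f x y g ≤ M)
    (q : G → ℝ) (hq0 : ∀ g, 0 ≤ q g) (hq1 : ∑ g, q g = 1)
    -- the latent objective
    (F : X → Y → ℝ) (hF : F = fun x y => ∑ g, q g * f x y g)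
    (hFpos : ∀ x y, 0 < F x y)
    (ε : ℝ) (hε0 : 0 ≤ ε) (hε1 : ε < 1)
    -- the score function, uniformly `ε`-multiplicatively close to `F`
    (h : X → Y → ℝ)
    (happrox : ∀ x y, |h x y - F x y| ≤ ε * F x y)
    (β : ℝ) (hβ0 : 0 < β) (hβ1 : β ≤ 1)
    -- `Mdl` is a `β`-approximate minimizer of the score
    (Mdl : X → Y)
    (hMdl : ∀ x, β * h x (Mdl x) ≤
      Finset.univ.inf' Finset.univ_nonempty (fun y => h x y))
    -- the query distribution
    (DX : X → ℝ) (hDX0 : ∀ x, 0 ≤ DX x) (hDX1 : ∑ x, DX x = 1) :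
    (∑ x, DX x *
        (Finset.univ.inf' Finset.univ_nonempty (fun y => F x y) / F x (Mdl x)))
      ≥ β * ((1 - ε) / (1 + ε)) := by
  set c := β * ((1 - ε) / (1 + ε)) with hc
  have hεpos : (0 : ℝ) < 1 + ε := by linarith
  have key : ∀ x, c ≤
      Finset.univ.inf' Finset.univ_nonempty (fun y => F x y) / F x (Mdl x) := by
    intro x
    obtain ⟨y0, -, hy0⟩ :=
      Finset.exists_mem_eq_inf' (Finset.univ_nonempty) (fun y => F x y)
    have h1 : (1 - ε) * F x (Mdl x) ≤ h x (Mdl x) := by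
      have := happrox x (Mdl x)
      rw [abs_sub_le_iff] at this
      nlinarith [this.2]
    have h2 : h x y0 ≤ (1 + ε) * F x y0 := by
      have := happrox x y0
      rw [abs_sub_le_iff] at this
      nlinarith [this.1]
    have h3 : β * h x (Mdl x) ≤ h x y0 :=
      (hMdl x).trans (Finset.inf'_le _ (Finset.mem_univ y0))
    have hchain : β * ((1 - ε) * F x (Mdl x)) ≤ (1 + ε) * F x y0 := by nlinarith
    rw [hy0, hc, le_div_iff₀ (hFpos x (Mdl x))]
    have heq : β * ((1 - ε) / (1 + ε)) * F x (Mdl x)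
        = (β * ((1 - ε) * F x (Mdl x))) / (1 + ε) := by ring
    rw [heq, div_le_iff₀ hεpos]
    nlinarith [hchain, (hFpos x y0).le]
  calc (∑ x, DX x *
        (Finset.univ.inf' Finset.univ_nonempty (fun y => F x y) / F x (Mdl x)))
      ≥ ∑ x, DX x * c := by
        apply Finset.sum_le_sum
        intro x _
        exact mul_le_mul_of_nonneg_left (key x) (hDX0 x)
    _ = c := by rw [← Finset.sum_mul, hDX1, one_mul]
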